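/- Let r, q ∈ ℚ with 0 < r < q ≤ 1, let M be a positive integer with Mr ∈ ℤ and Mq ∈ ℤ, and let p be a prime with p ≡ 1 (mod M). Then (p−1)r and (p−1)(q−r) are positive integers, the rational number (1+r−q)_{(p−1)r} / ((p−1)r)! is a p-adic integer, and in ℤ_p one has (1+r−q)_{(p−1)r} / ((p−1)r)! ≡ −J(ω̄_p^{(p−1)r}, ω̄_p^{(p−1)(q−r)}) (mod p·ℤ_p). -/

import Mathlib

open scoped BigOperators
open Finset

noncomputable section

/-- The rising factorial (Pochhammer symbol) `(a)_k` for a rational `a`. -/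
def poch (a : ℚ) (k : ℕ) : ℚ := Polynomial.eval a (ascPochhammer ℚ k)

/-- The Jacobi sum `J(χ,ψ) = Σ_{x ∈ ZMod p} χ(x)·ψ(1−x)` of two `ℤ_p`-valued maps on `ZMod p`. -/
def jacobiSumP {p : ℕ} [Fact (Nat.Prime p)] (χ ψ : ZMod p → ℤ_[p]) : ℤ_[p] :=
  ∑ x : ZMod p, χ x * ψ (1 - x)

/-- Let `r, q ∈ ℚ` with `0 < r < q ≤ 1`, let `M` be a positive integer with
`Mr, Mq ∈ ℤ`, and let `p ≡ 1 (mod M)` be prime.  Then `(p−1)r` and `(p−1)(q−r)` are positive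
integers `a`, `b`, the rational `(1+r−q)_{(p−1)r}/((p−1)r)!` is a `p`-adic integer, and
`(1+r−q)_{(p−1)r}/((p−1)r)! ≡ −J(ω̄^{(p−1)r}, ω̄^{(p−1)(q−r)}) (mod p·ℤ_p)`. -/
lemma poch_prod (x : ℚ) (k : ℕ) :
    poch x k = ∏ i ∈ range k, (x + i) := by
  induction k with
  | zero => simp [poch]
  | succ n ih => rw [poch, ascPochhammer_succ_eval, prod_range_succ, ← poch, ih]

lemma sum_pow_zmod {p : ℕ} [Fact p.Prime] {k : ℕ} (hk : k ≠ 0) :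
    ∑ x : ZMod p, x ^ k = if (p - 1) ∣ k then -1 else 0 := by
  classical
  have h0 : ∑ x : ZMod p, x ^ k = ∑ x : (ZMod p)ˣ, (x : ZMod p) ^ k := by
    let φ : (ZMod p)ˣ ↪ ZMod p := ⟨fun x ↦ x, fun _ _ h => Units.ext h⟩
    have huniv : univ.map φ = univ \ {0} := by
      ext x
      simp only [mem_map, mem_univ, true_and, mem_sdiff, mem_singleton, φ]
      exact ⟨fun ⟨u, hu⟩ => by rw [← hu]; exact u.ne_zero,
        fun h => ⟨(isUnit_iff_ne_zero.mpr h).unit, rfl⟩⟩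
    calc
      ∑ x : ZMod p, x ^ k = ∑ x ∈ univ \ {(0 : ZMod p)}, x ^ k := by
        rw [← sum_sdiff ({0} : Finset (ZMod p)).subset_univ, sum_singleton, zero_pow hk, add_zero]
      _ = ∑ x : (ZMod p)ˣ, (x : ZMod p) ^ k := by simp [φ, ← huniv, univ.sum_map φ]; rfl
  rw [h0]
  have := FiniteField.sum_pow_units (ZMod p) k
  rwa [ZMod.card] at this

lemma jacobi_sum_zmod {p : ℕ} [Fact p.Prime] (a b : ℕ) (ha : 1 ≤ a) (hb : 1 ≤ b)
    (hab : a + b ≤ p - 1) :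
    ∑ t : ZMod p, t ^ (p - 1 - a) * (1 - t) ^ (p - 1 - b)
      = -((-1 : ZMod p) ^ a * ((p - 1 - b).choose a : ZMod p)) := by
  have hp2 : 2 ≤ p := (Fact.out : p.Prime).two_le
  set A := p - 1 - a with hA
  set B := p - 1 - b with hB
  have hexp : ∀ t : ZMod p, (1 - t) ^ B
      = ∑ j ∈ range (B + 1), (-1) ^ j * (B.choose j : ZMod p) * t ^ j := by
    intro t
    have h := add_pow (-t) 1 B
    simp only [one_pow, mul_one] at h
    rw [show (1 - t : ZMod p) = -t + 1 by ring, h]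
    refine sum_congr rfl fun j _ => ?_
    rw [neg_pow]
    ring
  calc ∑ t : ZMod p, t ^ A * (1 - t) ^ B
      = ∑ t : ZMod p, ∑ j ∈ range (B + 1), (-1) ^ j * (B.choose j : ZMod p) * t ^ (A + j) := by
        refine sum_congr rfl fun t _ => ?_
        rw [hexp t, mul_sum]
        refine sum_congr rfl fun j _ => ?_
        rw [pow_add]; ring
    _ = ∑ j ∈ range (B + 1), ∑ t : ZMod p, (-1) ^ j * (B.choose j : ZMod p) * t ^ (A + j) :=
        sum_comm
    _ = ∑ j ∈ range (B + 1), (-1) ^ j * (B.choose j : ZMod p) * ∑ t : ZMod p, t ^ (A + j) := by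
        refine sum_congr rfl fun j _ => ?_
        rw [mul_sum]
    _ = -((-1 : ZMod p) ^ a * ((p - 1 - b).choose a : ZMod p)) := by
        rw [Finset.sum_eq_single a]
        · have : (p - 1) ∣ A + a := ⟨1, by omega⟩
          rw [sum_pow_zmod (by omega), if_pos this]
          ring
        · intro j hj hja
          have hjB : j ≤ B := by simpa using Nat.lt_succ_iff.mp (mem_range.mp hj)
          have hdvd : ¬ (p - 1) ∣ A + j := by
            rintro ⟨m, hm⟩
            have hm2 : m < 2 := by
              by_contra h
              have : (p - 1) * 2 ≤ (p - 1) * m := Nat.mul_le_mul_left _ (by omega)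
              omega
            interval_cases m <;> omega
          rw [sum_pow_zmod (by omega), if_neg hdvd, mul_zero]
        · intro h
          exact absurd (mem_range.mpr (by omega)) h

lemma choose_flip {p : ℕ} [Fact p.Prime] (a b : ℕ) (hb : 1 ≤ b) (hab : a + b ≤ p - 1) :
    (-1 : ZMod p) ^ a * ((p - 1 - b).choose a : ZMod p) = ((a + b).choose a : ZMod p) := by
  have hp2 : 2 ≤ p := (Fact.out : p.Prime).two_le
  have hfa : ((a.factorial : ℕ) : ZMod p) ≠ 0 := by
    rw [Ne, ZMod.natCast_eq_zero_iff, (Fact.out : p.Prime).dvd_factorial]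
    omega
  apply mul_left_cancel₀ hfa
  rw [← mul_assoc, mul_comm ((a.factorial : ℕ) : ZMod p) ((-1 : ZMod p) ^ a), mul_assoc,
    ← Nat.cast_mul, ← Nat.cast_mul, ← Nat.descFactorial_eq_factorial_mul_choose,
    ← Nat.descFactorial_eq_factorial_mul_choose]
  rw [Nat.descFactorial_eq_prod_range, Nat.descFactorial_eq_prod_range, Nat.cast_prod,
    Nat.cast_prod, ← prod_range_reflect (fun i => ((a + b - i : ℕ) : ZMod p)) a]
  rw [show ((-1 : ZMod p)) ^ a = ∏ _i ∈ range a, (-1 : ZMod p) by simp, ← prod_mul_distrib]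
  refine prod_congr rfl fun i hi => ?_
  have hi' : i < a := mem_range.mp hi
  have e1 : p - 1 - b - i = p - (b + 1 + i) := by omega
  have e2 : a + b - (a - 1 - i) = b + 1 + i := by omega
  rw [e2, e1, Nat.cast_sub (by omega), ZMod.natCast_self, zero_sub]
  ring

-- product of b+1+i equals descFactorial of a+b
lemma prod_eq_descFactorial (a b : ℕ) :
    ∏ i ∈ range a, (b + 1 + i) = (a + b).descFactorial a := by
  rw [Nat.descFactorial_eq_prod_range, ← prod_range_reflect (fun i => (a + b - i)) a]
  refine prod_congr rfl fun i hi => ?_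
  have hi' : i < a := mem_range.mp hi
  omega

theorem pochhammer_quotient_congr_jacobi (p M : ℕ) [Fact (Nat.Prime p)] (hM : 0 < M)
    (r q : ℚ) (hr0 : 0 < r) (hrq : r < q) (hq1 : q ≤ 1)
    (hMr : ∃ z : ℤ, (M : ℚ) * r = (z : ℚ)) (hMq : ∃ z : ℤ, (M : ℚ) * q = (z : ℚ))
    (hpM : p ≡ 1 [MOD M])
    (ω ωb : ZMod p → ℤ_[p])
    (hω_mul : ∀ x y : ZMod p, ω (x * y) = ω x * ω y)
    (hω_red : ∀ x : ZMod p, PadicInt.toZMod (ω x) = x)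
    (hωb_zero : ωb 0 = 0)
    (hωb_inv : ∀ x : ZMod p, x ≠ 0 → ω x * ωb x = 1) :
    ∃ a b : ℕ, 0 < a ∧ 0 < b ∧
      (a : ℚ) = ((p : ℚ) - 1) * r ∧ (b : ℚ) = ((p : ℚ) - 1) * (q - r) ∧
      ‖((poch (1 + r - q) a / (a.factorial : ℚ) : ℚ) : ℚ_[p])‖ ≤ 1 ∧
      ∃ c : ℤ_[p],
        ((poch (1 + r - q) a / (a.factorial : ℚ) : ℚ) : ℚ_[p])
            + ((jacobiSumP (fun t => ωb t ^ a) (fun t => ωb t ^ b) : ℤ_[p]) : ℚ_[p])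
          = (p : ℚ_[p]) * (c : ℚ_[p]) := by
  have hp : p.Prime := Fact.out
  have hp2 : 2 ≤ p := hp.two_le
  obtain ⟨zr, hzr⟩ := hMr
  obtain ⟨zq, hzq⟩ := hMq
  have hMd : M ∣ p - 1 := (Nat.modEq_iff_dvd' (by omega)).mp hpM.symm
  obtain ⟨k, hk⟩ := hMd
  have hp1Q : ((p : ℚ) - 1) = ((p - 1 : ℕ) : ℚ) := by
    rw [Nat.cast_sub (by omega), Nat.cast_one]
  -- define a
  have haQ' : ((p : ℚ) - 1) * r = ((k * zr : ℤ) : ℚ) := by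
    rw [hp1Q, hk]
    push_cast
    rw [mul_comm (M : ℚ) (k : ℚ), mul_assoc, hzr]
  have hapos : (0 : ℚ) < ((k * zr : ℤ) : ℚ) := by
    rw [← haQ']
    have : (2 : ℚ) ≤ (p : ℚ) := by exact_mod_cast hp2
    nlinarith
  set a : ℕ := (k * zr).toNat with hadef
  have haZ : (a : ℤ) = k * zr := Int.toNat_of_nonneg (by exact_mod_cast hapos.le)
  have haQ : (a : ℚ) = ((p : ℚ) - 1) * r := by rw [haQ', ← haZ]; push_cast; ring
  have ha : 0 < a := by
    have : (0 : ℚ) < (a : ℚ) := by rw [haQ, haQ']; exact hapos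
    exact_mod_cast this
  -- define b
  have hbQ' : ((p : ℚ) - 1) * (q - r) = ((k * (zq - zr) : ℤ) : ℚ) := by
    rw [hp1Q, hk]
    push_cast
    have : (M : ℚ) * k * (q - r) = (k : ℚ) * ((M : ℚ) * q - (M : ℚ) * r) := by ring
    rw [this, hzq, hzr]
  have hbpos : (0 : ℚ) < ((k * (zq - zr) : ℤ) : ℚ) := by
    rw [← hbQ']
    have : (2 : ℚ) ≤ (p : ℚ) := by exact_mod_cast hp2
    nlinarith
  set b : ℕ := (k * (zq - zr)).toNat with hbdef
  have hbZ : (b : ℤ) = k * (zq - zr) := Int.toNat_of_nonneg (by exact_mod_cast hbpos.le)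
  have hbQ : (b : ℚ) = ((p : ℚ) - 1) * (q - r) := by rw [hbQ', ← hbZ]; push_cast; ring
  have hb : 0 < b := by
    have : (0 : ℚ) < (b : ℚ) := by rw [hbQ, hbQ']; exact hbpos
    exact_mod_cast this
  -- a + b ≤ p - 1
  have hab : a + b ≤ p - 1 := by
    have h1 : ((a + b : ℕ) : ℚ) ≤ ((p - 1 : ℕ) : ℚ) := by
      push_cast
      rw [haQ, hbQ, ← hp1Q]
      have h2 : (2 : ℚ) ≤ (p : ℚ) := by exact_mod_cast hp2
      nlinarith
    exact_mod_cast h1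
  refine ⟨a, b, ha, hb, haQ, hbQ, ?_⟩
  -- the integer N and natural D
  set N : ℤ := ∏ i ∈ range a, (((i : ℤ) + 1) * ((p : ℤ) - 1) - (b : ℤ)) with hNdef
  set D : ℕ := (p - 1) ^ a * a.factorial with hDdef
  have hfact0 : (a.factorial : ℚ) ≠ 0 := by exact_mod_cast a.factorial_ne_zero
  -- rational identity
  have hQ : (poch (1 + r - q) a / (a.factorial : ℚ)) * (D : ℚ) = ((N : ℤ) : ℚ) := by
    have key : (∏ i ∈ range a, (1 + r - q + i)) * ((p : ℚ) - 1) ^ a = ((N : ℤ) : ℚ) := by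
      rw [show ((p : ℚ) - 1) ^ a = ∏ _i ∈ range a, ((p : ℚ) - 1) by simp, ← prod_mul_distrib,
        hNdef, Int.cast_prod]
      refine prod_congr rfl fun i _ => ?_
      push_cast
      linear_combination hbQ
    rw [div_mul_eq_mul_div, hDdef]
    push_cast [← hp1Q]
    rw [div_eq_iff hfact0, poch_prod, ← key]
    ring
  -- p does not divide D
  have hnd : ¬ p ∣ D := by
    rw [hDdef]
    intro h
    rcases (Nat.Prime.dvd_mul hp).mp h with h1 | h2
    · have h3 := hp.dvd_of_dvd_pow h1
      have := Nat.le_of_dvd (by omega) h3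
      omega
    · have := (Nat.Prime.dvd_factorial hp).mp h2
      omega
  have hDQp : ‖((D : ℕ) : ℚ_[p])‖ = 1 := by
    have hle : ‖((D : ℤ) : ℚ_[p])‖ ≤ 1 := Padic.norm_int_le_one _
    have hlt : ¬ ‖((D : ℤ) : ℚ_[p])‖ < 1 := by
      rw [Padic.norm_intCast_lt_one_iff]
      intro h
      exact hnd (by exact_mod_cast h)
    have h1 : ‖((D : ℤ) : ℚ_[p])‖ = 1 := le_antisymm hle (not_lt.mp hlt)
    rw [← h1]
    norm_cast
  have hQp : ((poch (1 + r - q) a / (a.factorial : ℚ) : ℚ) : ℚ_[p]) * ((D : ℕ) : ℚ_[p])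
      = ((N : ℤ) : ℚ_[p]) := by
    have h := congrArg (fun t : ℚ => (t : ℚ_[p])) hQ
    push_cast at h
    exact_mod_cast h
  have hxnorm : ‖((poch (1 + r - q) a / (a.factorial : ℚ) : ℚ) : ℚ_[p])‖ ≤ 1 := by
    have h1 : ‖((poch (1 + r - q) a / (a.factorial : ℚ) : ℚ) : ℚ_[p])‖ * ‖((D : ℕ) : ℚ_[p])‖
        = ‖((N : ℤ) : ℚ_[p])‖ := by rw [← norm_mul, hQp]
    rw [hDQp, mul_one] at h1
    rw [h1]
    exact Padic.norm_int_le_one N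
  refine ⟨hxnorm, ?_⟩
  set X : ℤ_[p] := ⟨_, hxnorm⟩ with hXdef
  set J : ℤ_[p] := jacobiSumP (fun t => ωb t ^ a) (fun t => ωb t ^ b) with hJdef
  suffices hker : PadicInt.toZMod (X + J) = 0 by
    have hmem : X + J ∈ Ideal.span {(p : ℤ_[p])} := by
      rw [← PadicInt.maximalIdeal_eq_span_p, ← PadicInt.ker_toZMod]
      exact RingHom.mem_ker.mpr hker
    obtain ⟨c, hc⟩ := Ideal.mem_span_singleton.mp hmem
    refine ⟨c, ?_⟩
    have h := congrArg (fun z : ℤ_[p] => (z : ℚ_[p])) hc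
    push_cast at h
    exact_mod_cast h
  -- reduction of X
  have hXD : X * ((D : ℕ) : ℤ_[p]) = ((N : ℤ) : ℤ_[p]) := by
    apply Subtype.coe_injective
    push_cast
    exact hQp
  have hXred : PadicInt.toZMod X * ((D : ℕ) : ZMod p) = ((N : ℤ) : ZMod p) := by
    have h := congrArg PadicInt.toZMod hXD
    rwa [map_mul, map_natCast, map_intCast] at h
  have hDne : ((D : ℕ) : ZMod p) ≠ 0 := by
    rw [Ne, ZMod.natCast_eq_zero_iff]
    exact hnd
  -- reduction of J
  have hf : ∀ t : ZMod p, PadicInt.toZMod (ωb t) = t⁻¹ := by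
    intro t
    by_cases ht : t = 0
    · rw [ht, hωb_zero, map_zero, inv_zero]
    · have h := congrArg PadicInt.toZMod (hωb_inv t ht)
      rw [map_mul, hω_red, map_one] at h
      exact (inv_eq_of_mul_eq_one_right h).symm
  have hpow : ∀ (t : ZMod p) (m : ℕ), 1 ≤ m → m + 1 ≤ p - 1 → (t⁻¹) ^ m = t ^ (p - 1 - m) := by
    intro t m h1 h2
    by_cases ht : t = 0
    · rw [ht, inv_zero, zero_pow (by omega), zero_pow (by omega)]
    · have htm : t ^ m ≠ 0 := pow_ne_zero _ ht
      apply mul_right_cancel₀ htm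
      rw [← mul_pow, inv_mul_cancel₀ ht, one_pow, ← pow_add,
        show p - 1 - m + m = p - 1 by omega]
      exact (ZMod.pow_card_sub_one_eq_one ht).symm
  have hJred : PadicInt.toZMod J = -(((a + b).choose a : ℕ) : ZMod p) := by
    rw [hJdef]
    unfold jacobiSumP
    rw [map_sum]
    calc ∑ t : ZMod p, PadicInt.toZMod (ωb t ^ a * ωb (1 - t) ^ b)
        = ∑ t : ZMod p, t ^ (p - 1 - a) * (1 - t) ^ (p - 1 - b) := by
          refine sum_congr rfl fun t _ => ?_
          rw [map_mul, map_pow, map_pow, hf, hf, hpow t a ha (by omega),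
            hpow _ b hb (by omega)]
      _ = -(((a + b).choose a : ℕ) : ZMod p) := by
          rw [jacobi_sum_zmod a b ha hb hab, choose_flip a b hb hab]
  -- reduction of N
  have hNred : ((N : ℤ) : ZMod p)
      = (-1) ^ a * ((a.factorial * (a + b).choose a : ℕ) : ZMod p) := by
    rw [hNdef, Int.cast_prod]
    calc ∏ i ∈ range a, ((((i : ℤ) + 1) * ((p : ℤ) - 1) - (b : ℤ) : ℤ) : ZMod p)
        = ∏ i ∈ range a, (-1 : ZMod p) * ((b + 1 + i : ℕ) : ZMod p) := by
          refine prod_congr rfl fun i _ => ?_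
          push_cast
          rw [ZMod.natCast_self]
          ring
      _ = (-1) ^ a * (((∏ i ∈ range a, (b + 1 + i) : ℕ)) : ZMod p) := by
          rw [prod_mul_distrib, prod_const, card_range, Nat.cast_prod]
      _ = _ := by rw [prod_eq_descFactorial, Nat.descFactorial_eq_factorial_mul_choose]
  -- reduction of D
  have hDred : ((D : ℕ) : ZMod p) = (-1) ^ a * (a.factorial : ZMod p) := by
    rw [hDdef, Nat.cast_mul, Nat.cast_pow, Nat.cast_sub (by omega), Nat.cast_one,
      ZMod.natCast_self, zero_sub]
  -- combine
  have hXJ : (PadicInt.toZMod X + PadicInt.toZMod J) * ((D : ℕ) : ZMod p) = 0 := by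
    rw [add_mul, hXred, hJred, hNred, hDred]
    push_cast
    ring
  rcases mul_eq_zero.mp hXJ with h | h
  · rw [map_add]
    exact h
  · exact absurd h hDne
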